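/- Let $A$, $B$, $C$ be three non-collinear points in the Euclidean plane and let $k = \max\{|AC|, |BC|\}$. Then the set of points $P$ in the plane such that $|PA| - |PC|$ and $|PB| - |PC|$ are both integers has cardinality at most $4(k+1)^2$. -/

import Mathlib

noncomputable def vv (a b : ℂ) (m n : ℝ) : ℂ :=
  ⟨(-m*b.im + n*a.im)/(a.re*b.im - a.im*b.re),
   (-n*a.re + m*b.re)/(a.re*b.im - a.im*b.re)⟩

noncomputable def uu (a b : ℂ) (m n : ℝ) : ℂ :=
  ⟨(((a.re^2+a.im^2-m^2)/2)*b.im - ((b.re^2+b.im^2-n^2)/2)*a.im)/(a.re*b.im - a.im*b.re),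
   (((b.re^2+b.im^2-n^2)/2)*a.re - ((a.re^2+a.im^2-m^2)/2)*b.re)/(a.re*b.im - a.im*b.re)⟩

lemma quadA (c2 c1 c0 : ℝ) (h : ¬(c2 = 0 ∧ c1 = 0 ∧ c0 = 0)) :
    ∃ x y : ℝ, ∀ r : ℝ, c2*r^2 + c1*r + c0 = 0 → r = x ∨ r = y := by
  by_cases hc2 : c2 = 0
  · by_cases hc1 : c1 = 0
    · refine ⟨0, 0, fun r hr => ?_⟩
      exfalso
      refine h ⟨hc2, hc1, ?_⟩
      subst hc2 hc1; linarith [hr]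
    · refine ⟨-c0/c1, -c0/c1, fun r hr => ?_⟩
      left
      subst hc2
      field_simp
      linarith [hr]
  · refine ⟨(-c1 + Real.sqrt (c1^2 - 4*c2*c0))/(2*c2),
      (-c1 - Real.sqrt (c1^2 - 4*c2*c0))/(2*c2), fun r hr => ?_⟩
    have h1 : (2*c2*r + c1)^2 = c1^2 - 4*c2*c0 := by linear_combination 4*c2*hr
    have h2 : Real.sqrt (c1^2 - 4*c2*c0) = |2*c2*r + c1| := by
      rw [← h1]; exact Real.sqrt_sq_eq_abs _
    rcases abs_cases (2*c2*r + c1) with ⟨he, _⟩ | ⟨he, _⟩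
    · left; rw [h2, he]; field_simp; ring
    · right; rw [h2, he]; field_simp; ring

lemma memT (a b : ℂ) (hD : a.re*b.im - a.im*b.re ≠ 0) (m n : ℝ) (z : ℂ)
    (h1 : ‖z - a‖ = ‖z‖ + m)
    (h2 : ‖z - b‖ = ‖z‖ + n) :
    z = uu a b m n + (‖z‖ : ℂ) * vv a b m n := by
  set r := ‖z‖ with hr
  have hr2 : z.re^2 + z.im^2 = r^2 := by
    rw [hr, Complex.sq_norm, Complex.normSq_apply]; ring
  have e1 : (z.re - a.re)^2 + (z.im - a.im)^2 = (r + m)^2 := by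
    have := congrArg (·^2) h1
    simp only [Complex.sq_norm, Complex.normSq_apply, Complex.sub_re, Complex.sub_im] at this
    linear_combination this
  have e2 : (z.re - b.re)^2 + (z.im - b.im)^2 = (r + n)^2 := by
    have := congrArg (·^2) h2
    simp only [Complex.sq_norm, Complex.normSq_apply, Complex.sub_re, Complex.sub_im] at this
    linear_combination this
  have e1' : a.re*z.re + a.im*z.im = (a.re^2+a.im^2-m^2)/2 - r*m := by
    linear_combination (hr2 - e1)/2
  have e2' : b.re*z.re + b.im*z.im = (b.re^2+b.im^2-n^2)/2 - r*n := by
    linear_combination (hr2 - e2)/2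
  have hzre : z.re * (a.re*b.im - a.im*b.re)
      = ((a.re^2+a.im^2-m^2)/2 - r*m) * b.im - ((b.re^2+b.im^2-n^2)/2 - r*n) * a.im := by
    linear_combination b.im * e1' - a.im * e2'
  have hzim : z.im * (a.re*b.im - a.im*b.re)
      = ((b.re^2+b.im^2-n^2)/2 - r*n) * a.re - ((a.re^2+a.im^2-m^2)/2 - r*m) * b.re := by
    linear_combination a.re * e2' - b.re * e1'
  apply Complex.ext
  · simp only [Complex.add_re, Complex.mul_re, Complex.ofReal_re, Complex.ofReal_im, uu, vv,
      zero_mul, sub_zero]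
    rw [← mul_div_assoc, ← add_div, eq_div_iff hD]
    linear_combination hzre
  · simp only [Complex.add_im, Complex.mul_im, Complex.ofReal_re, Complex.ofReal_im, uu, vv,
      zero_mul, add_zero]
    rw [← mul_div_assoc, ← add_div, eq_div_iff hD]
    linear_combination hzim

lemma quadEq (u v z : ℂ) (r : ℝ) (hz : z = u + (r:ℂ)*v) (hr : ‖z‖ = r) :
    (v.re^2+v.im^2-1)*r^2 + (2*(u.re*v.re+u.im*v.im))*r + (u.re^2+u.im^2) = 0 := by
  have hr2 : z.re^2 + z.im^2 = r^2 := by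
    rw [← hr, Complex.sq_norm, Complex.normSq_apply]; ring
  subst hz
  simp only [Complex.add_re, Complex.add_im, Complex.mul_re, Complex.mul_im,
    Complex.ofReal_re, Complex.ofReal_im, zero_mul, sub_zero, add_zero] at hr2
  linear_combination hr2

lemma coeffs_ne (a b : ℂ) (hD : a.re*b.im - a.im*b.re ≠ 0) (m n : ℝ) :
    ¬(((vv a b m n).re^2+(vv a b m n).im^2-1 = 0) ∧
      (2*((uu a b m n).re*(vv a b m n).re+(uu a b m n).im*(vv a b m n).im) = 0) ∧
      ((uu a b m n).re^2+(uu a b m n).im^2 = 0)) := by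
  rintro ⟨hc2, -, hc0⟩
  set D := a.re*b.im - a.im*b.re with hDdef
  have hure : (uu a b m n).re = 0 := by nlinarith [sq_nonneg (uu a b m n).re, sq_nonneg (uu a b m n).im]
  have huim : (uu a b m n).im = 0 := by nlinarith [sq_nonneg (uu a b m n).re, sq_nonneg (uu a b m n).im]
  set α := (a.re^2+a.im^2-m^2)/2 with hα
  set β := (b.re^2+b.im^2-n^2)/2 with hβ
  have eq1 : α*b.im - β*a.im = 0 := by
    have : (α*b.im - β*a.im)/D = 0 := hure
    exact (div_eq_zero_iff.mp this).resolve_right hD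
  have eq2 : β*a.re - α*b.re = 0 := by
    have : (β*a.re - α*b.re)/D = 0 := huim
    exact (div_eq_zero_iff.mp this).resolve_right hD
  have hαD : α * D = 0 := by rw [hDdef]; linear_combination a.re*eq1 + a.im*eq2
  have hβD : β * D = 0 := by rw [hDdef]; linear_combination b.re*eq1 + b.im*eq2
  have hα0 : α = 0 := by
    rcases mul_eq_zero.mp hαD with h | h
    · exact h
    · exact absurd h hD
  have hβ0 : β = 0 := by
    rcases mul_eq_zero.mp hβD with h | h
    · exact h
    · exact absurd h hD
  have hma : m^2 = a.re^2 + a.im^2 := by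
    have := hα0; rw [hα] at this; linarith
  have hnb : n^2 = b.re^2 + b.im^2 := by
    have := hβ0; rw [hβ] at this; linarith
  set vr := -m*b.im + n*a.im with hvr
  set vi := -n*a.re + m*b.re with hvi
  have hvsum : vr^2 + vi^2 = D^2 := by
    have h2 : (vr/D)^2 + (vi/D)^2 - 1 = 0 := hc2
    field_simp at h2
    linarith [h2]
  have cross1 : vr*a.im - vi*a.re = 0 := by
    have hsq : (vr*a.im - vi*a.re)^2 = 0 := by
      have lag : (vr*a.im - vi*a.re)^2
          = (vr^2+vi^2)*(a.re^2+a.im^2) - (vr*a.re + vi*a.im)^2 := by ring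
      have hdot : vr*a.re + vi*a.im = -m*D := by rw [hvr, hvi, hDdef]; ring
      rw [lag, hdot, hvsum, ← hma]; ring
    exact pow_eq_zero_iff (n := 2) (by norm_num) |>.mp hsq
  have cross2 : vr*b.im - vi*b.re = 0 := by
    have hsq : (vr*b.im - vi*b.re)^2 = 0 := by
      have lag : (vr*b.im - vi*b.re)^2
          = (vr^2+vi^2)*(b.re^2+b.im^2) - (vr*b.re + vi*b.im)^2 := by ring
      have hdot : vr*b.re + vi*b.im = -n*D := by rw [hvr, hvi, hDdef]; ring
      rw [lag, hdot, hvsum, ← hnb]; ring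
    exact pow_eq_zero_iff (n := 2) (by norm_num) |>.mp hsq
  have hvrD : vr * D = 0 := by rw [hDdef]; linear_combination a.re*cross2 - b.re*cross1
  have hviD : vi * D = 0 := by rw [hDdef]; linear_combination a.im*cross2 - b.im*cross1
  have hvr0 : vr = 0 := (mul_eq_zero.mp hvrD).resolve_right hD
  have hvi0 : vi = 0 := (mul_eq_zero.mp hviD).resolve_right hD
  have : D^2 = 0 := by rw [← hvsum, hvr0, hvi0]; ring
  exact hD (pow_eq_zero_iff (n := 2) (by norm_num) |>.mp this)

lemma uu_neg (a b : ℂ) (m n : ℝ) : uu a b (-m) (-n) = uu a b m n := by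
  unfold uu; ring_nf

lemma vv_neg (a b : ℂ) (m n : ℝ) : vv a b (-m) (-n) = - vv a b m n := by
  unfold vv
  apply Complex.ext <;> simp [Complex.neg_re, Complex.neg_im] <;> ring

lemma pair_cover (a b : ℂ) (hD : a.re*b.im - a.im*b.re ≠ 0) (m n : ℝ) :
    ∃ x y : ℂ, ∀ z : ℂ,
      ((‖z - a‖ = ‖z‖ + m ∧ ‖z - b‖ = ‖z‖ + n) ∨
       (‖z - a‖ = ‖z‖ + (-m) ∧ ‖z - b‖ = ‖z‖ + (-n))) →
      z = x ∨ z = y := by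
  set u := uu a b m n with hu
  set v := vv a b m n with hv
  obtain ⟨xr, yr, hroots⟩ := quadA (v.re^2+v.im^2-1) (2*(u.re*v.re+u.im*v.im)) (u.re^2+u.im^2)
    (coeffs_ne a b hD m n)
  refine ⟨u + (xr:ℂ)*v, u + (yr:ℂ)*v, fun z hz => ?_⟩
  rcases hz with ⟨h1, h2⟩ | ⟨h1, h2⟩
  · have hzeq := memT a b hD m n z h1 h2
    have hq := quadEq u v z (‖z‖) hzeq rfl
    rcases hroots _ hq with h | h
    · left; rw [hzeq, h]
    · right; rw [hzeq, h]
  · have hzeq := memT a b hD (-m) (-n) z h1 h2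
    rw [uu_neg, vv_neg, ← hu, ← hv] at hzeq
    have hzeq' : z = u + ((-(‖z‖) : ℝ) : ℂ) * v := by
      conv_lhs => rw [hzeq]
      push_cast; ring
    have hq0 := quadEq u (-v) z (‖z‖) (by conv_lhs => rw [hzeq]) rfl
    have hq : (v.re^2+v.im^2-1)*(-(‖z‖))^2
        + (2*(u.re*v.re+u.im*v.im))*(-(‖z‖)) + (u.re^2+u.im^2) = 0 := by
      simp only [Complex.neg_re, Complex.neg_im] at hq0
      linear_combination hq0
    rcases hroots _ hq with h | h
    · left; rw [hzeq', h]
    · right; rw [hzeq', h]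

lemma collinear_of_det (A B C : ℂ)
    (hD : (A-C).re*(B-C).im - (A-C).im*(B-C).re = 0) :
    Collinear ℝ ({A, B, C} : Set ℂ) := by
  rw [collinear_iff_of_mem (show C ∈ ({A,B,C} : Set ℂ) by simp)]
  by_cases ha : A - C = 0
  · refine ⟨B - C, fun p hp => ?_⟩
    rcases hp with rfl | rfl | rfl
    · exact ⟨0, by simp [sub_eq_zero.mp ha]⟩
    · exact ⟨1, by simp⟩
    · exact ⟨0, by simp⟩
  · refine ⟨A - C, fun p hp => ?_⟩
    rcases hp with rfl | rfl | rfl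
    · exact ⟨1, by simp⟩
    · set a := A - C with hadef
      set b := p - C with hbdef
      have hns : a.re^2 + a.im^2 ≠ 0 := by
        intro h0
        apply ha
        have h1 : a.re = 0 := by nlinarith [sq_nonneg a.re, sq_nonneg a.im]
        have h2 : a.im = 0 := by nlinarith [sq_nonneg a.re, sq_nonneg a.im]
        exact Complex.ext (by simp [h1]) (by simp [h2])
      refine ⟨(b.re*a.re + b.im*a.im)/(a.re^2+a.im^2), ?_⟩
      have hb : b = ((b.re*a.re + b.im*a.im)/(a.re^2+a.im^2)) • a := by
        apply Complex.ext
        · rw [Complex.smul_re, smul_eq_mul, div_mul_eq_mul_div, eq_div_iff hns]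
          linear_combination (-a.im) * hD
        · rw [Complex.smul_im, smul_eq_mul, div_mul_eq_mul_div, eq_div_iff hns]
          linear_combination a.re * hD
      rw [hbdef] at hb
      exact sub_eq_iff_eq_add.mp hb
    · exact ⟨0, by simp⟩

theorem finitely_many_points_integral_distance_differences
    (A B C : ℂ) (h : ¬ Collinear ℝ ({A, B, C} : Set ℂ))
    (k : ℝ) (hk : k = max (dist A C) (dist B C)) :
    {P : ℂ | (∃ m : ℤ, dist P A - dist P C = m) ∧ (∃ n : ℤ, dist P B - dist P C = n)}.Finite ∧
    (({P : ℂ | (∃ m : ℤ, dist P A - dist P C = m) ∧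
        (∃ n : ℤ, dist P B - dist P C = n)}.ncard : ℝ)) ≤ 4 * (k + 1) ^ 2 := by
  classical
  set a := A - C with hadef
  set b := B - C with hbdef
  have hD : a.re*b.im - a.im*b.re ≠ 0 := fun h0 => h (collinear_of_det A B C h0)
  have hcov := fun m n : ℝ => pair_cover a b hD m n
  choose fx fy hf using hcov
  set g : ℤ × ℤ → Finset ℂ := fun pq =>
    {fx (pq.1 : ℝ) (pq.2 : ℝ) + C, fy (pq.1 : ℝ) (pq.2 : ℝ) + C,
     fx (pq.1 : ℝ) (-(pq.2 : ℝ)) + C, fy (pq.1 : ℝ) (-(pq.2 : ℝ)) + C} with hg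
  set F := (Finset.Icc (0:ℤ) ⌊k⌋) ×ˢ (Finset.Icc (0:ℤ) ⌊k⌋) with hF
  have hk0 : (0:ℝ) ≤ k := hk ▸ le_trans dist_nonneg (le_max_left _ _)
  have hsub : {P : ℂ | (∃ m : ℤ, dist P A - dist P C = m) ∧ (∃ n : ℤ, dist P B - dist P C = n)}
      ⊆ ↑(F.biUnion g) := by
    rintro P ⟨⟨m, hm⟩, ⟨n, hn⟩⟩
    set z := P - C with hz
    have hza : ‖z - a‖ = ‖z‖ + (m:ℝ) := by
      have h1 : z - a = P - A := by rw [hz, hadef]; ring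
      rw [h1, hz, ← Complex.dist_eq, ← Complex.dist_eq]
      linarith [hm]
    have hzb : ‖z - b‖ = ‖z‖ + (n:ℝ) := by
      have h1 : z - b = P - B := by rw [hz, hbdef]; ring
      rw [h1, hz, ← Complex.dist_eq, ← Complex.dist_eq]
      linarith [hn]
    have hmb : |m| ≤ ⌊k⌋ := by
      apply Int.le_floor.mpr
      have h2 : |(m:ℝ)| ≤ dist A C := by
        rw [← hm, dist_comm P A, dist_comm P C]
        exact abs_dist_sub_le A C P
      push_cast
      exact h2.trans (hk ▸ le_max_left _ _)
    have hnb : |n| ≤ ⌊k⌋ := by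
      apply Int.le_floor.mpr
      have h2 : |(n:ℝ)| ≤ dist B C := by
        rw [← hn, dist_comm P B, dist_comm P C]
        exact abs_dist_sub_le B C P
      push_cast
      exact h2.trans (hk ▸ le_max_right _ _)
    have hPz : P = z + C := by rw [hz]; ring
    simp only [Finset.coe_biUnion, Set.mem_iUnion, Finset.mem_coe]
    refine ⟨(|m|, |n|), ?_, ?_⟩
    · rw [hF, Finset.mem_product]
      constructor <;> rw [Finset.mem_Icc] <;> exact ⟨abs_nonneg _, by assumption⟩
    · rcases le_or_gt 0 m with hm0 | hm0 <;> rcases le_or_gt 0 n with hn0 | hn0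
      · have hc := hf ((|m|:ℤ) : ℝ) ((|n|:ℤ) : ℝ) z
          (Or.inl ⟨by rw [hza, abs_of_nonneg hm0], by rw [hzb, abs_of_nonneg hn0]⟩)
        rw [hg]
        rcases hc with hc | hc <;> rw [hPz, hc] <;> simp
      · have hc := hf ((|m|:ℤ) : ℝ) (-((|n|:ℤ) : ℝ)) z
          (Or.inl ⟨by rw [hza, abs_of_nonneg hm0],
            by rw [hzb, abs_of_neg hn0]; push_cast; ring⟩)
        rw [hg]
        rcases hc with hc | hc <;> rw [hPz, hc] <;> simp
      · have hc := hf ((|m|:ℤ) : ℝ) (-((|n|:ℤ) : ℝ)) z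
          (Or.inr ⟨by rw [hza, abs_of_neg hm0]; push_cast; ring,
            by rw [hzb, abs_of_nonneg hn0];  ring⟩)
        rw [hg]
        rcases hc with hc | hc <;> rw [hPz, hc] <;> simp
      · have hc := hf ((|m|:ℤ) : ℝ) ((|n|:ℤ) : ℝ) z
          (Or.inr ⟨by rw [hza, abs_of_neg hm0]; push_cast; ring,
            by rw [hzb, abs_of_neg hn0]; push_cast; ring⟩)
        rw [hg]
        rcases hc with hc | hc <;> rw [hPz, hc] <;> simp
  have hgcard : ∀ pq : ℤ × ℤ, (g pq).card ≤ 4 := by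
    intro pq
    rw [hg]
    refine le_trans (Finset.card_insert_le _ _) ?_
    refine Nat.succ_le_succ (le_trans (Finset.card_insert_le _ _) ?_)
    refine Nat.succ_le_succ (le_trans (Finset.card_insert_le _ _) ?_)
    exact Nat.succ_le_succ (Finset.card_singleton _).le
  have hGcard : (F.biUnion g).card ≤ F.card * 4 :=
    Finset.card_biUnion_le_card_mul _ _ _ (fun pq _ => hgcard pq)
  have hFcard : F.card = (⌊k⌋ + 1).toNat * (⌊k⌋ + 1).toNat := by
    rw [hF, Finset.card_product, Int.card_Icc]
    norm_num
  have hfin : {P : ℂ | (∃ m : ℤ, dist P A - dist P C = m) ∧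
      (∃ n : ℤ, dist P B - dist P C = n)}.Finite :=
    Set.Finite.subset (F.biUnion g).finite_toSet hsub
  refine ⟨hfin, ?_⟩
  have hn1 : {P : ℂ | (∃ m : ℤ, dist P A - dist P C = m) ∧
      (∃ n : ℤ, dist P B - dist P C = n)}.ncard ≤ (F.biUnion g).card := by
    rw [← Set.ncard_coe_finset]
    exact Set.ncard_le_ncard hsub (F.biUnion g).finite_toSet
  have hfloor : ((⌊k⌋ + 1).toNat : ℝ) ≤ k + 1 := by
    have h1 : ⌊k⌋ + 1 ≥ 0 := by
      have := Int.floor_nonneg.mpr hk0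
      omega
    have h2 : (((⌊k⌋ + 1).toNat : ℕ) : ℝ) = (⌊k⌋ : ℝ) + 1 := by
      exact_mod_cast congrArg (Int.cast : ℤ → ℝ) (Int.toNat_of_nonneg h1)
    rw [h2]
    have := Int.floor_le k
    linarith
  calc ({P : ℂ | (∃ m : ℤ, dist P A - dist P C = m) ∧
      (∃ n : ℤ, dist P B - dist P C = n)}.ncard : ℝ)
      ≤ ((F.biUnion g).card : ℝ) := by exact_mod_cast hn1
    _ ≤ (F.card * 4 : ℕ) := by exact_mod_cast hGcard
    _ = 4 * ((⌊k⌋ + 1).toNat : ℝ)^2 := by rw [hFcard]; push_cast; ring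
    _ ≤ 4 * (k + 1)^2 := by
        have h0 : (0:ℝ) ≤ ((⌊k⌋ + 1).toNat : ℝ) := Nat.cast_nonneg _
        nlinarith [hfloor]
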